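/- If c g(0) − f(0) < (α+1)·(h_{α,0}/α^α)^(1/(α+1)) with h_{α,0} := lim_{u→0⁺} h(u)/u^α finite, then problem (P) has no solution for this c. Equivalently, if g(0) > 0, no solution exists when c < f(0)/g(0) + ((α+1)/g(0))·(h_{α,0}/α^α)^(1/(α+1)). -/

import Mathlib

open Set Filter Topology Real

lemma stmt8_amgm {α l M : ℝ} (hα : 0 < α) (hl : 0 < l) (hM : 0 < M) :
    (α + 1) * (l / α ^ α) ^ (1 / (α + 1)) ≤ M + l * M ^ (-α) := by
  have hβ : (0:ℝ) < α + 1 := by linarith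
  have hw : α / (α + 1) + 1 / (α + 1) = 1 := by field_simp
  have hp₁ : (0:ℝ) ≤ (α + 1) / α * M := by positivity
  have hp₂ : (0:ℝ) ≤ (α + 1) * (l * M ^ (-α)) := by positivity
  have key := Real.geom_mean_le_arith_mean2_weighted
    (by positivity : (0:ℝ) ≤ α / (α+1)) (by positivity : (0:ℝ) ≤ 1 / (α+1)) hp₁ hp₂ hw
  have hrhs : α / (α + 1) * ((α + 1) / α * M) + 1 / (α + 1) * ((α + 1) * (l * M ^ (-α)))
      = M + l * M ^ (-α) := by field_simp
  rw [hrhs] at key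
  refine le_trans (le_of_eq ?_) key
  have hMα : (0:ℝ) < M ^ (-α) := rpow_pos_of_pos hM _
  have h1 : ((α + 1) / α * M) ^ (α / (α + 1))
      = ((α+1)/α) ^ (α / (α+1)) * M ^ (α / (α+1)) :=
    Real.mul_rpow (by positivity) hM.le
  have h2 : ((α + 1) * (l * M ^ (-α))) ^ (1 / (α + 1))
      = (α+1) ^ (1/(α+1)) * (l ^ (1/(α+1)) * (M ^ (-α)) ^ (1/(α+1))) := by
    rw [Real.mul_rpow hβ.le (by positivity), Real.mul_rpow hl.le hMα.le]
  rw [h1, h2]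
  have h3 : ((α+1)/α) ^ (α/(α+1)) = (α+1) ^ (α/(α+1)) * (α ^ (α/(α+1)))⁻¹ := by
    rw [Real.div_rpow hβ.le hα.le, div_eq_mul_inv]
  have h4 : (M ^ (-α)) ^ (1/(α+1)) = (M ^ (α/(α+1)))⁻¹ := by
    rw [← Real.rpow_mul hM.le, neg_mul, Real.rpow_neg hM.le, mul_one_div]
  have h5 : (l / α ^ α) ^ (1/(α+1)) = l ^ (1/(α+1)) * (α ^ (α/(α+1)))⁻¹ := by
    rw [Real.div_rpow hl.le (by positivity), div_eq_mul_inv, ← Real.rpow_mul hα.le,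
      mul_one_div]
  have h6 : (α+1) ^ (α/(α+1)) * (α+1) ^ (1/(α+1)) = α + 1 := by
    rw [← Real.rpow_add hβ, hw, Real.rpow_one]
  have hMne : M ^ (α/(α+1)) ≠ 0 := (rpow_pos_of_pos hM _).ne'
  rw [h3, h4, h5]
  set a := (α+1) ^ (α/(α+1)) with ha
  set b := (α+1) ^ (1/(α+1)) with hb
  set L := l ^ (1/(α+1)) with hL
  set Aa := α ^ (α/(α+1)) with hAa
  set Mp := M ^ (α/(α+1)) with hMp
  rw [← h6]
  field_simp

/-- If `c g(0) − f(0) < (α+1)(h_{α,0}/α^α)^{1/(α+1)}`, where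
`h_{α,0} = lim_{u→0⁺} h(u)/u^α` is finite, then problem (P) has no solution for
this `c`. -/
theorem stmt_8 (α c : ℝ) (hα : 0 < α) (f g h : ℝ → ℝ)
    (hf : ContinuousOn f (Icc 0 1)) (hg : ContinuousOn g (Icc 0 1))
    (hh : ContinuousOn h (Icc 0 1))
    (hh0 : h 0 = 0) (hh1 : h 1 = 0) (hhpos : ∀ u ∈ Ioo (0:ℝ) 1, 0 < h u)
    (hg0 : 0 < g 0)
    (l : ℝ) (hl : Tendsto (fun u => h u / u ^ α) (𝓝[>] (0:ℝ)) (𝓝 l))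
    (hc : c * g 0 - f 0 < (α + 1) * (l / α ^ α) ^ (1 / (α + 1))) :
    ¬ ∃ z : ℝ → ℝ,
      (∀ u ∈ Ioo (0:ℝ) 1, HasDerivAt z (c * g u - f u - h u / z u ^ α) u) ∧
      (∀ u ∈ Ioo (0:ℝ) 1, 0 < z u) ∧
      Tendsto z (𝓝[>] (0:ℝ)) (𝓝 0) ∧
      Tendsto z (𝓝[<] (1:ℝ)) (𝓝 0) := by
  rintro ⟨z, hderiv, hzpos, hz0, hz1⟩
  set A := c * g 0 - f 0 with hAdef
  have h0mem : (0:ℝ) ∈ Icc (0:ℝ) 1 := ⟨le_refl 0, zero_le_one⟩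
  have hIoo1 : Ioo (0:ℝ) 1 ∈ 𝓝[>] (0:ℝ) := Ioo_mem_nhdsGT one_pos
  have hl0 : 0 ≤ l := by
    refine ge_of_tendsto hl ?_
    filter_upwards [hIoo1] with u hu
    exact div_nonneg (hhpos u hu).le (Real.rpow_nonneg hu.1.le α)
  have hnle : 𝓝[>] (0:ℝ) ≤ 𝓝[Icc (0:ℝ) 1] 0 := by
    rw [← nhdsWithin_Ioc_eq_nhdsGT (by norm_num : (0:ℝ) < 1)]
    exact nhdsWithin_mono _ Ioc_subset_Icc_self
  have hgf : Tendsto (fun x => c * g x - f x) (𝓝[>] (0:ℝ)) (𝓝 A) := by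
    have hcw : ContinuousWithinAt (fun x => c * g x - f x) (Icc 0 1) 0 :=
      ((hg.continuousWithinAt h0mem).const_mul c).sub (hf.continuousWithinAt h0mem)
    exact hcw.tendsto.mono_left hnle
  set Z : ℝ → ℝ := fun u => if u = 0 then 0 else z u with hZdef
  have key : ∀ u ∈ Ioo (0:ℝ) 1, ∃ ξ ∈ Ioo (0:ℝ) u,
      c * g ξ - f ξ - h ξ / z ξ ^ α = z u / u := by
    intro u hu
    have hderivZ : ∀ x ∈ Ioo (0:ℝ) u, HasDerivAt Z (c * g x - f x - h x / z x ^ α) x := by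
      intro x hx
      have hx1 : x ∈ Ioo (0:ℝ) 1 := ⟨hx.1, hx.2.trans hu.2⟩
      refine (hderiv x hx1).congr_of_eventuallyEq ?_
      filter_upwards [isOpen_Ioi.mem_nhds hx.1] with y hy
      simp [hZdef, (ne_of_gt hy : y ≠ 0)]
    have hcont : ContinuousOn Z (Icc 0 u) := by
      intro t ht
      rcases eq_or_lt_of_le ht.1 with h0 | h0
      · subst h0
        have hZeq : z =ᶠ[𝓝[>] (0:ℝ)] Z := by
          filter_upwards [self_mem_nhdsWithin] with y hy
          simp [hZdef, (ne_of_gt hy : y ≠ 0)]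
        have hZ0 : Tendsto Z (𝓝[>] (0:ℝ)) (𝓝 0) := hz0.congr' hZeq
        have hsub : Icc (0:ℝ) u ⊆ insert (0:ℝ) (Ioi 0) := by
          intro y hy
          rcases eq_or_lt_of_le hy.1 with hy0 | hy0
          · exact mem_insert_iff.2 (Or.inl hy0.symm)
          · exact mem_insert_iff.2 (Or.inr hy0)
        refine ContinuousWithinAt.mono ?_ hsub
        rw [continuousWithinAt_insert_self]
        have : Z 0 = 0 := by simp [hZdef]
        unfold ContinuousWithinAt
        rw [this]
        exact hZ0
      · have ht1 : t ∈ Ioo (0:ℝ) 1 := ⟨h0, lt_of_le_of_lt ht.2 hu.2⟩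
        have hca : ContinuousAt Z t := by
          refine (hderiv t ht1).continuousAt.congr ?_
          filter_upwards [isOpen_Ioi.mem_nhds h0] with y hy
          simp [hZdef, (ne_of_gt hy : y ≠ 0)]
        exact hca.continuousWithinAt
    obtain ⟨ξ, hξ, heq⟩ := exists_hasDerivAt_eq_slope Z _ hu.1 hcont hderivZ
    refine ⟨ξ, hξ, ?_⟩
    rw [heq]
    simp [hZdef, (ne_of_gt hu.1 : u ≠ 0)]
  rcases hl0.eq_or_lt with hl0' | hlpos
  · -- case l = 0 : A < 0
    have hA0 : A < 0 := by
      have hz' : ((0:ℝ) / α ^ α) ^ (1/(α+1)) = 0 := by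
        rw [zero_div, Real.zero_rpow (by positivity : (0:ℝ) < 1/(α+1)).ne']
      rw [← hl0', hz', mul_zero] at hc
      exact hc
    obtain ⟨δ, hδ0, hδsub⟩ := mem_nhdsGT_iff_exists_Ioo_subset.1
      (hgf.eventually_lt_const hA0)
    have hδ0' : (0:ℝ) < δ := hδ0
    have hu₀mem : min δ 1 / 2 ∈ Ioo (0:ℝ) 1 := by
      constructor
      · positivity
      · have : min δ 1 ≤ 1 := min_le_right _ _
        linarith
    have hu₀δ : min δ 1 / 2 < δ := by
      have : min δ 1 ≤ δ := min_le_left _ _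
      linarith
    obtain ⟨ξ₀, hξm, heq⟩ := key _ hu₀mem
    have hξ01 : ξ₀ ∈ Ioo (0:ℝ) 1 := ⟨hξm.1, hξm.2.trans hu₀mem.2⟩
    have h1 : c * g ξ₀ - f ξ₀ < 0 := hδsub ⟨hξm.1, hξm.2.trans hu₀δ⟩
    have h2 : 0 < h ξ₀ / z ξ₀ ^ α :=
      div_pos (hhpos _ hξ01) (Real.rpow_pos_of_pos (hzpos _ hξ01) α)
    have h3 : 0 < z (min δ 1 / 2) / (min δ 1 / 2) := div_pos (hzpos _ hu₀mem) hu₀mem.1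
    linarith
  · -- case l > 0
    have hboundev : ∀ᶠ x in 𝓝[>] (0:ℝ), c * g x - f x ≤ A + 1 :=
      (hgf.eventually_lt_const (lt_add_one A)).mono fun x hx => hx.le
    have hub : ∀ᶠ u in 𝓝[>] (0:ℝ), z u / u ≤ A + 1 := by
      obtain ⟨δ, hδ0, hδsub⟩ := mem_nhdsGT_iff_exists_Ioo_subset.1 hboundev
      have hδ0' : (0:ℝ) < δ := hδ0
      filter_upwards [Ioo_mem_nhdsGT (lt_min hδ0' one_pos)] with u hu
      have hu1 : u ∈ Ioo (0:ℝ) 1 := ⟨hu.1, hu.2.trans_le (min_le_right _ _)⟩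
      obtain ⟨ξ, hξ, heq⟩ := key u hu1
      have hξ1 : ξ ∈ Ioo (0:ℝ) 1 := ⟨hξ.1, hξ.2.trans hu1.2⟩
      have hξδ : ξ ∈ Ioo (0:ℝ) δ := ⟨hξ.1, hξ.2.trans (hu.2.trans_le (min_le_left _ _))⟩
      have hnn : 0 ≤ h ξ / z ξ ^ α :=
        div_nonneg (hhpos ξ hξ1).le (Real.rpow_nonneg (hzpos ξ hξ1).le α)
      have hb : c * g ξ - f ξ ≤ A + 1 := hδsub hξδ
      linarith
    have hposS : ∀ᶠ u in 𝓝[>] (0:ℝ), 0 < z u / u := by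
      filter_upwards [hIoo1] with u hu
      exact div_pos (hzpos u hu) hu.1
    set M := limsup (fun u => z u / u) (𝓝[>] (0:ℝ)) with hMdef
    have hbdd : IsBoundedUnder (· ≤ ·) (𝓝[>] (0:ℝ)) (fun u => z u / u) :=
      ⟨A + 1, eventually_map.2 hub⟩
    have hbddge : IsBoundedUnder (· ≥ ·) (𝓝[>] (0:ℝ)) (fun u => z u / u) :=
      ⟨0, eventually_map.2 (hposS.mono fun u hu => hu.le)⟩
    have hcob : IsCoboundedUnder (· ≤ ·) (𝓝[>] (0:ℝ)) (fun u => z u / u) :=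
      hbddge.isCoboundedUnder_le
    have hM0 : 0 ≤ M :=
      le_limsup_of_frequently_le (hposS.mono fun u hu => hu.le).frequently hbdd
    have hsel : ∀ n : ℕ, ∃ u : ℝ,
        (M - 1/((n:ℝ)+1) < z u / u ∧ z u / u < M + 1/((n:ℝ)+1)) ∧
        u ∈ Ioo (0:ℝ) (min (1/((n:ℝ)+1)) 1) := by
      intro n
      have hn : (0:ℝ) < 1/((n:ℝ)+1) := by positivity
      have h1 := frequently_lt_of_lt_limsup hcob
        (by linarith : M - 1/((n:ℝ)+1) < M)
      have h2 := eventually_lt_of_limsup_lt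
        (by linarith : M < M + 1/((n:ℝ)+1)) hbdd
      have h3 : Ioo (0:ℝ) (min (1/((n:ℝ)+1)) 1) ∈ 𝓝[>] (0:ℝ) :=
        Ioo_mem_nhdsGT (lt_min hn one_pos)
      exact ((h1.and_eventually h2).and_eventually
        (eventually_of_mem h3 fun x hx => hx)).exists
    choose u hu₁ hu₂ using hsel
    have hun01 : ∀ n, u n ∈ Ioo (0:ℝ) 1 :=
      fun n => ⟨(hu₂ n).1, (hu₂ n).2.trans_le (min_le_right _ _)⟩
    choose ξ hξmem hξeq using fun n => key (u n) (hun01 n)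
    have hξ01 : ∀ n, ξ n ∈ Ioo (0:ℝ) 1 :=
      fun n => ⟨(hξmem n).1, (hξmem n).2.trans (hun01 n).2⟩
    have htend0 : Tendsto (fun n : ℕ => 1/((n:ℝ)+1)) atTop (𝓝 0) :=
      tendsto_one_div_add_atTop_nhds_zero_nat
    have hξlt : ∀ n, ξ n < 1/((n:ℝ)+1) :=
      fun n => (hξmem n).2.trans ((hu₂ n).2.trans_le (min_le_left _ _))
    have hξten : Tendsto ξ atTop (𝓝 0) :=
      squeeze_zero (fun n => (hξmem n).1.le) (fun n => (hξlt n).le) htend0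
    have hξtenI : Tendsto ξ atTop (𝓝[>] (0:ℝ)) :=
      tendsto_nhdsWithin_of_tendsto_nhds_of_eventually_within _ hξten
        (Eventually.of_forall fun n => (hξmem n).1)
    have hlo : Tendsto (fun n : ℕ => M - 1/((n:ℝ)+1)) atTop (𝓝 M) := by
      simpa using tendsto_const_nhds.sub htend0
    have hhi : Tendsto (fun n : ℕ => M + 1/((n:ℝ)+1)) atTop (𝓝 M) := by
      simpa using tendsto_const_nhds.add htend0
    have hSuM : Tendsto (fun n => z (u n) / u n) atTop (𝓝 M) :=
      tendsto_of_tendsto_of_tendsto_of_le_of_le hlo hhi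
        (fun n => (hu₁ n).1.le) (fun n => (hu₁ n).2.le)
    have hcgfn : Tendsto (fun n => c * g (ξ n) - f (ξ n)) atTop (𝓝 A) :=
      hgf.comp hξtenI
    have hP : Tendsto (fun n => h (ξ n) / z (ξ n) ^ α) atTop (𝓝 (A - M)) := by
      refine (hcgfn.sub hSuM).congr fun n => ?_
      have := hξeq n
      linarith
    have hhln : Tendsto (fun n => h (ξ n) / (ξ n) ^ α) atTop (𝓝 l) :=
      hl.comp hξtenI
    have hs : Tendsto (fun n => (ξ n) ^ α / z (ξ n) ^ α) atTop (𝓝 ((A - M)/l)) := by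
      refine (hP.div hhln hlpos.ne').congr fun n => ?_
      have hzp := hzpos _ (hξ01 n)
      have hhp := hhpos _ (hξ01 n)
      have hξp := (hξmem n).1
      have hzα : z (ξ n) ^ α ≠ 0 := (Real.rpow_pos_of_pos hzp α).ne'
      have hξα : (ξ n) ^ α ≠ 0 := (Real.rpow_pos_of_pos hξp α).ne'
      simp only [Pi.div_apply]
      field_simp
    set L := (A - M)/l with hLdef
    have hLlow : ∀ ε : ℝ, 0 < ε → (M + ε) ^ (-α) ≤ L := by
      intro ε hε
      have hMε : (0:ℝ) < M + ε := by linarith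
      have hev : ∀ᶠ x in 𝓝[>] (0:ℝ), z x / x < M + ε :=
        eventually_lt_of_limsup_lt (by linarith : M < M + ε) hbdd
      have hev2 : ∀ᶠ n in atTop, z (ξ n) / ξ n < M + ε := hξtenI.eventually hev
      refine ge_of_tendsto hs ?_
      filter_upwards [hev2] with n hn
      have hξp := (hξmem n).1
      have hzp := hzpos _ (hξ01 n)
      have hz' : z (ξ n) ≤ (M + ε) * ξ n := by
        rw [div_lt_iff₀ hξp] at hn
        linarith
      have h1 : z (ξ n) ^ α ≤ ((M + ε) * ξ n) ^ α :=
        Real.rpow_le_rpow hzp.le hz' hα.le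
      rw [Real.mul_rpow hMε.le hξp.le] at h1
      have hξα : (0:ℝ) < (ξ n) ^ α := Real.rpow_pos_of_pos hξp α
      have hzα : (0:ℝ) < z (ξ n) ^ α := Real.rpow_pos_of_pos hzp α
      have hMα : (0:ℝ) < (M + ε) ^ α := Real.rpow_pos_of_pos hMε α
      rw [Real.rpow_neg hMε.le, le_div_iff₀ hzα, inv_mul_le_iff₀ hMα]
      exact h1
    have hL0 : 0 < L :=
      lt_of_lt_of_le (Real.rpow_pos_of_pos (by linarith : (0:ℝ) < M + 1) (-α))
        (hLlow 1 one_pos)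
    have hM1 : L ^ (-(1/α)) ≤ M := by
      refine le_of_forall_pos_le_add fun ε hε => ?_
      have hMε : (0:ℝ) < M + ε := by linarith
      have h1 := hLlow ε hε
      have h2 := Real.rpow_le_rpow_of_nonpos (Real.rpow_pos_of_pos hMε (-α)) h1
        (neg_nonpos.2 (by positivity) : -(1/α) ≤ 0)
      rwa [← Real.rpow_mul hMε.le, (by field_simp : (-α) * (-(1/α)) = 1),
        Real.rpow_one] at h2
    have hMpos : 0 < M := lt_of_lt_of_le (Real.rpow_pos_of_pos hL0 _) hM1
    have hLM : M ^ (-α) ≤ L := by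
      have h2 := Real.rpow_le_rpow_of_nonpos (Real.rpow_pos_of_pos hL0 _) hM1
        (neg_nonpos.2 hα.le)
      rwa [← Real.rpow_mul hL0.le, (by field_simp : (-(1/α)) * (-α) = 1),
        Real.rpow_one] at h2
    have hfin : l * M ^ (-α) ≤ A - M := by
      have h1 : l * M ^ (-α) ≤ l * L := mul_le_mul_of_nonneg_left hLM hlpos.le
      have h2 : l * L = A - M := by
        rw [hLdef]
        field_simp
      linarith
    have hamgm := stmt8_amgm hα hlpos hMpos
    linarith
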